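/- Let q = r^2 where r is an odd prime power, let g be a primitive element of F_q^*, and set β = g^{r−1}. Let s ≥ 1 and j ≥ 0 be integers. Define u = ∏_{h=0}^{s−1} (β^{−2j} + β^{−2h}) ∈ F_q. Then u^r = β^{2(sj + s(s−1)/2)} · u. -/

import Mathlib

open Finset

private lemma zpow_sum_aux {F : Type*} [Field F] (b : F) (f : ℕ → ℤ) (t : Finset ℕ) (hb : b ≠ 0) :
    b ^ (∑ i ∈ t, f i) = ∏ i ∈ t, b ^ f i := by
  induction t using Finset.induction with
  | empty => simp
  | insert _ _ h ih => rw [Finset.sum_insert h, Finset.prod_insert h, zpow_add₀ hb, ih]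

private lemma sum_two_mul_aux (s : ℕ) :
    ∑ h ∈ Finset.range s, 2 * (h : ℤ) = (s : ℤ) * ((s : ℤ) - 1) := by
  induction s with
  | zero => simp
  | succ m ih => rw [Finset.sum_range_succ, ih]; push_cast; ring

/-- Let `q = r²` with `r` an odd prime power, `g` a primitive element of
`F^*`, and `β = g^{r-1}`.  For integers `s ≥ 1` and `j ≥ 0`, the element
`u = ∏_{h=0}^{s-1} (β^{-2j} + β^{-2h})` satisfies `u^r = β^{2(sj + s(s-1)/2)} · u`.
(The exponent `2(sj + s(s-1)/2) = 2sj + s(s-1)` is taken as an integer.) -/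
theorem pow_r_of_prod_zpow_add (F : Type*) [Field F] [Fintype F]
    (r : ℕ) (hr : IsPrimePow r) (hrodd : Odd r) (hcard : Fintype.card F = r ^ 2)
    (g : F) (hg : orderOf g = Fintype.card F - 1)
    (s : ℕ) (hs : 1 ≤ s) (j : ℕ) :
    (∏ h ∈ Finset.range s,
        ((g ^ (r - 1)) ^ (-2 * (j : ℤ)) + (g ^ (r - 1)) ^ (-2 * (h : ℤ)))) ^ r =
      (g ^ (r - 1)) ^ (2 * (s : ℤ) * (j : ℤ) + (s : ℤ) * ((s : ℤ) - 1)) *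
        ∏ h ∈ Finset.range s,
          ((g ^ (r - 1)) ^ (-2 * (j : ℤ)) + (g ^ (r - 1)) ^ (-2 * (h : ℤ))) := by
  obtain ⟨p', k, hp', hk, hr'⟩ := hr
  -- characteristic
  set p := ringChar F with hpdef
  haveI : CharP F p := ringChar.charP F
  obtain ⟨n, hpprime, hcard'⟩ := FiniteField.card F p
  haveI := Fact.mk hpprime
  have hrk : r = p ^ k := by
    have h1 : p' ^ (2 * k) = p ^ (n : ℕ) := by
      rw [mul_comm, pow_mul, hr', ← hcard, hcard']
    have hpp' : p' = p := by
      have hdvd : p ∣ p' ^ (2 * k) := by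
        rw [h1]; exact dvd_pow_self p (by positivity)
      have := (Nat.Prime.dvd_of_dvd_pow hpprime hdvd)
      exact ((Nat.prime_dvd_prime_iff_eq hpprime (hp'.nat_prime)).mp this).symm
    rw [← hr', hpp']
  have hr1 : 2 ≤ r := by
    rw [hrk]; calc 2 ≤ p := hpprime.two_le
    _ ≤ p ^ k := Nat.le_self_pow hk.ne' p
  -- g ≠ 0
  have hg0 : g ≠ 0 := by
    intro h
    have : orderOf g = 0 := by
      rw [h]; simp [orderOf_eq_zero_iff']
    rw [hg, hcard] at this
    have h2 : r ^ 2 ≤ 1 := Nat.le_of_sub_eq_zero this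
    nlinarith
  set b : F := g ^ (r - 1) with hbdef
  have hb0 : b ≠ 0 := pow_ne_zero _ hg0
  -- b ^ (r+1) = 1
  have hbr : b ^ ((r : ℤ) + 1) = 1 := by
    have : b ^ ((r : ℤ) + 1) = g ^ (((r : ℤ) - 1) * ((r : ℤ) + 1)) := by
      rw [zpow_mul, hbdef]
      congr 1
      rw [← zpow_natCast g (r - 1)]
      congr 1
      push_cast [Nat.cast_sub (by omega : 1 ≤ r)]
      ring
    rw [this]
    have h2 : ((r : ℤ) - 1) * ((r : ℤ) + 1) = (r : ℤ) ^ 2 - 1 := by ring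
    rw [h2]
    have hord : g ^ (r ^ 2 - 1) = 1 := by
      rw [← hcard, ← hg]; exact pow_orderOf_eq_one g
    rw [show ((r : ℤ) ^ 2 - 1) = ((r ^ 2 - 1 : ℕ) : ℤ) by
      push_cast [Nat.cast_sub (by nlinarith : 1 ≤ r ^ 2)]; ring]
    rw [zpow_natCast, hord]
  have hbinv : b ^ (r : ℤ) = b⁻¹ := by
    have := hbr
    rw [zpow_add₀ hb0, zpow_one] at this
    field_simp at this ⊢
    linear_combination this
  -- Frobenius on each factor
  have hfrob : ∀ x y : F, (x + y) ^ r = x ^ r + y ^ r := by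
    intro x y
    rw [hrk]
    exact add_pow_char_pow ..
  have hzr : ∀ m : ℤ, (b ^ m) ^ r = b ^ (-m) := by
    intro m
    rw [← zpow_natCast (b ^ m) r, ← zpow_mul, mul_comm, zpow_mul, hbinv,
      inv_zpow, ← zpow_neg]
  calc (∏ h ∈ Finset.range s, (b ^ (-2 * (j : ℤ)) + b ^ (-2 * (h : ℤ)))) ^ r
      = ∏ h ∈ Finset.range s, (b ^ (2 * (j : ℤ)) + b ^ (2 * (h : ℤ))) := by
        rw [← Finset.prod_pow]
        refine Finset.prod_congr rfl fun h _ => ?_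
        rw [hfrob, hzr, hzr]; ring_nf
    _ = ∏ h ∈ Finset.range s,
          (b ^ (2 * (j : ℤ) + 2 * (h : ℤ)) * (b ^ (-2 * (j : ℤ)) + b ^ (-2 * (h : ℤ)))) := by
        refine Finset.prod_congr rfl fun h _ => ?_
        rw [mul_add, ← zpow_add₀ hb0, ← zpow_add₀ hb0]
        rw [show 2 * (j : ℤ) + 2 * (h : ℤ) + -2 * (j : ℤ) = 2 * (h : ℤ) by ring,
          show 2 * (j : ℤ) + 2 * (h : ℤ) + -2 * (h : ℤ) = 2 * (j : ℤ) by ring]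
        ring
    _ = (∏ h ∈ Finset.range s, b ^ (2 * (j : ℤ) + 2 * (h : ℤ))) *
          ∏ h ∈ Finset.range s, (b ^ (-2 * (j : ℤ)) + b ^ (-2 * (h : ℤ))) := by
        rw [Finset.prod_mul_distrib]
    _ = b ^ (2 * (s : ℤ) * (j : ℤ) + (s : ℤ) * ((s : ℤ) - 1)) *
          ∏ h ∈ Finset.range s, (b ^ (-2 * (j : ℤ)) + b ^ (-2 * (h : ℤ))) := by
        congr 1
        rw [← zpow_sum_aux b _ _ hb0]
        congr 1
        rw [Finset.sum_add_distrib, Finset.sum_const, Finset.card_range]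
        rw [sum_two_mul_aux]
        push_cast; ring
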